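/- Harish-Chandra Schwartz space is a convolution algebra: Let Γ be a discrete group with a length function |·| and φ : Γ → (0,∞) with φ(γ^{-1}) = φ(γ). Suppose there is t₀ > 0 such that for all t ≥ t₀ there is C_t with Σ_γ φ(gγ^{-1})φ(γ)/(1+|γ|)^t ≤ C_t φ(g) for all g ∈ Γ. Then for all t ≥ t₀, whenever f₁, f₂ : Γ → ℂ satisfy |f_i(γ)| ≤ A_i φ(γ)/(1+|γ|)^t, the convolution f₁ * f₂(g) = Σ_γ f₁(γ) f₂(γ^{-1}g) converges absolutely and satisfies |f₁ * f₂(g)| ≤ 2^{t+1} A₁ A₂ C_t φ(g)/(1+|g|)^t for all g ∈ Γ. -/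
import Mathlib

/-- the Harish-Chandra Schwartz space is a convolution algebra:
under the convolution estimate for `φ`, if `|f_i(γ)| ≤ A_i φ(γ)/(1+|γ|)^t` then
the convolution `f₁ * f₂` converges absolutely and
`|f₁ * f₂(g)| ≤ 2^{t+1} A₁ A₂ C_t φ(g)/(1+|g|)^t`. -/
theorem stmt17 {G : Type*} [Group G]
    -- length function
    (ℓ : G → ℝ) (hℓpos : ∀ γ, 0 ≤ ℓ γ)
    (hℓinv : ∀ γ, ℓ γ⁻¹ = ℓ γ) (hℓsub : ∀ γ g, ℓ (γ * g) ≤ ℓ γ + ℓ g)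
    -- symmetric positive Harish-Chandra function
    (φ : G → ℝ) (hφpos : ∀ γ, 0 < φ γ) (hφinv : ∀ γ, φ γ⁻¹ = φ γ)
    (t₀ : ℝ) (ht₀ : 0 < t₀) (t : ℝ) (ht : t₀ ≤ t)
    -- the convolution estimate for `φ` at exponent `t`, with constant `C_t`
    (Ct : ℝ) (hCt : 0 < Ct)
    (hconv : ∀ g : G,
      Summable (fun γ : G => φ (g * γ⁻¹) * φ γ / (1 + ℓ γ) ^ t) ∧
      ∑' γ : G, φ (g * γ⁻¹) * φ γ / (1 + ℓ γ) ^ t ≤ Ct * φ g)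
    -- two elements of the Schwartz space `S_t(Γ)`
    (f₁ f₂ : G → ℂ) (A₁ A₂ : ℝ)
    (hf₁ : ∀ γ, ‖f₁ γ‖ ≤ A₁ * φ γ / (1 + ℓ γ) ^ t)
    (hf₂ : ∀ γ, ‖f₂ γ‖ ≤ A₂ * φ γ / (1 + ℓ γ) ^ t)
    (g : G) :
    Summable (fun γ : G => ‖f₁ γ * f₂ (γ⁻¹ * g)‖) ∧
    ‖∑' γ : G, f₁ γ * f₂ (γ⁻¹ * g)‖
      ≤ 2 ^ (t + 1) * A₁ * A₂ * Ct * φ g / (1 + ℓ g) ^ t := by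
  have ht0 : 0 < t := lt_of_lt_of_le ht₀ ht
  have hA₁ : 0 ≤ A₁ := by
    have h := (norm_nonneg (f₁ 1)).trans (hf₁ 1)
    have hD : (0:ℝ) < (1 + ℓ 1) ^ t := by
      have := hℓpos 1; positivity
    rw [le_div_iff₀ hD] at h
    nlinarith [hφpos 1]
  have hA₂ : 0 ≤ A₂ := by
    have h := (norm_nonneg (f₂ 1)).trans (hf₂ 1)
    have hD : (0:ℝ) < (1 + ℓ 1) ^ t := by
      have := hℓpos 1; positivity
    rw [le_div_iff₀ hD] at h
    nlinarith [hφpos 1]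
  have hg1 : (0:ℝ) < 1 + ℓ g := by have := hℓpos g; linarith
  set K : ℝ := 2 ^ t * A₁ * A₂ / (1 + ℓ g) ^ t with hK
  have hKnn : 0 ≤ K := by positivity
  set a : G → ℝ := fun γ => φ γ * φ (γ⁻¹ * g) / (1 + ℓ γ) ^ t with ha
  set b : G → ℝ := fun γ => φ γ * φ (γ⁻¹ * g) / (1 + ℓ (γ⁻¹ * g)) ^ t with hb
  have hann : ∀ γ, 0 ≤ a γ := by
    intro γ; have := hℓpos γ; have := (hφpos γ).le; have := (hφpos (γ⁻¹*g)).le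
    positivity
  have hbnn : ∀ γ, 0 ≤ b γ := by
    intro γ; have := hℓpos (γ⁻¹*g); have := (hφpos γ).le; have := (hφpos (γ⁻¹*g)).le
    positivity
  -- pointwise bound
  have hpt : ∀ γ, ‖f₁ γ * f₂ (γ⁻¹ * g)‖ ≤ K * (a γ + b γ) := by
    intro γ
    set u : ℝ := 1 + ℓ γ with hu
    set v : ℝ := 1 + ℓ (γ⁻¹ * g) with hv
    have hu1 : (1:ℝ) ≤ u := by have := hℓpos γ; simp [hu]; linarith
    have hv1 : (1:ℝ) ≤ v := by have := hℓpos (γ⁻¹*g); simp [hv]; linarith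
    have hu0 : (0:ℝ) < u ^ t := by positivity
    have hv0 : (0:ℝ) < v ^ t := by positivity
    have htri : ℓ g ≤ ℓ γ + ℓ (γ⁻¹ * g) := by
      have := hℓsub γ (γ⁻¹ * g)
      simpa using this
    have huv : 1 + ℓ g ≤ u + v - 1 := by simp [hu, hv]; linarith
    have h1 : ‖f₁ γ * f₂ (γ⁻¹ * g)‖ ≤ (A₁ * φ γ / u ^ t) * (A₂ * φ (γ⁻¹*g) / v ^ t) := by
      rw [norm_mul]
      exact mul_le_mul (hf₁ γ) (hf₂ (γ⁻¹*g)) (norm_nonneg _)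
        (by have := (hφpos γ).le; positivity)
    rcases le_total u v with hle | hle
    · -- v is big : 1 + ℓ g ≤ 2 v
      have h2v : 1 + ℓ g ≤ 2 * v := by linarith
      have h3 : (1 + ℓ g) ^ t ≤ 2 ^ t * v ^ t := by
        rw [← Real.mul_rpow (by norm_num) (by linarith)]
        exact Real.rpow_le_rpow hg1.le h2v ht0.le
      have h4 : (1:ℝ) / v ^ t ≤ 2 ^ t / (1 + ℓ g) ^ t := by
        rw [div_le_div_iff₀ hv0 (by positivity)]
        linarith
      calc ‖f₁ γ * f₂ (γ⁻¹ * g)‖ ≤ (A₁ * φ γ / u ^ t) * (A₂ * φ (γ⁻¹*g) / v ^ t) := h1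
        _ = (A₁ * A₂ * (φ γ * φ (γ⁻¹*g) / u ^ t)) * (1 / v ^ t) := by ring
        _ ≤ (A₁ * A₂ * (φ γ * φ (γ⁻¹*g) / u ^ t)) * (2 ^ t / (1 + ℓ g) ^ t) := by
            apply mul_le_mul_of_nonneg_left h4
            have := (hφpos γ).le; have := (hφpos (γ⁻¹*g)).le; positivity
        _ = K * a γ := by rw [hK, ha]; ring
        _ ≤ K * (a γ + b γ) := by nlinarith [hbnn γ, hKnn]
    · have h2v : 1 + ℓ g ≤ 2 * u := by linarith
      have h3 : (1 + ℓ g) ^ t ≤ 2 ^ t * u ^ t := by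
        rw [← Real.mul_rpow (by norm_num) (by linarith)]
        exact Real.rpow_le_rpow hg1.le h2v ht0.le
      have h4 : (1:ℝ) / u ^ t ≤ 2 ^ t / (1 + ℓ g) ^ t := by
        rw [div_le_div_iff₀ hu0 (by positivity)]
        linarith
      calc ‖f₁ γ * f₂ (γ⁻¹ * g)‖ ≤ (A₁ * φ γ / u ^ t) * (A₂ * φ (γ⁻¹*g) / v ^ t) := h1
        _ = (A₁ * A₂ * (φ γ * φ (γ⁻¹*g) / v ^ t)) * (1 / u ^ t) := by ring
        _ ≤ (A₁ * A₂ * (φ γ * φ (γ⁻¹*g) / v ^ t)) * (2 ^ t / (1 + ℓ g) ^ t) := by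
            apply mul_le_mul_of_nonneg_left h4
            have := (hφpos γ).le; have := (hφpos (γ⁻¹*g)).le; positivity
        _ = K * b γ := by rw [hK, hb]; ring
        _ ≤ K * (a γ + b γ) := by nlinarith [hann γ, hKnn]
  -- summability and sum bound for a, via reindexing γ ↦ γ⁻¹ and hconv at g⁻¹
  have ha_eq : (fun γ : G => φ (g⁻¹ * γ⁻¹) * φ γ / (1 + ℓ γ) ^ t) = a ∘ ⇑(Equiv.inv G) := by
    funext γ
    have hφ1 : φ (γ * g) = φ (g⁻¹ * γ⁻¹) := by
      rw [← hφinv (γ * g), mul_inv_rev]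
    simp only [ha, Function.comp, Equiv.inv_apply, inv_inv, hℓinv, hφinv, hφ1]
    ring
  have hsa : Summable a ∧ ∑' γ, a γ ≤ Ct * φ g := by
    have h1 := (hconv g⁻¹).1
    have h2 := (hconv g⁻¹).2
    rw [ha_eq] at h1
    have hsum : Summable a := ((Equiv.inv G).summable_iff).mp h1
    refine ⟨hsum, ?_⟩
    rw [hφinv] at h2
    calc ∑' γ, a γ = ∑' γ, a ((Equiv.inv G) γ) := ((Equiv.inv G).tsum_eq a).symm
      _ = ∑' γ : G, φ (g⁻¹ * γ⁻¹) * φ γ / (1 + ℓ γ) ^ t := by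
          refine tsum_congr fun γ => ?_
          exact (congrFun ha_eq γ).symm
      _ ≤ Ct * φ g := h2
  -- summability and sum bound for b, via reindexing γ ↦ g γ⁻¹ and hconv at g
  let e₁ : G ≃ G := ⟨fun γ => g * γ⁻¹, fun γ => γ⁻¹ * g, fun γ => by group, fun γ => by group⟩
  have he₁ : ∀ γ, e₁ γ = g * γ⁻¹ := fun γ => rfl
  have hb_eq : ∀ γ : G, φ (g * γ⁻¹) * φ γ / (1 + ℓ γ) ^ t = b (e₁ γ) := by
    intro γ
    simp only [hb, he₁]
    rw [show (g * γ⁻¹)⁻¹ * g = γ from by group]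
  have hsb : Summable b ∧ ∑' γ, b γ ≤ Ct * φ g := by
    have h1 := (hconv g).1
    have h2 := (hconv g).2
    have h1' : Summable (fun γ => b (e₁ γ)) := by
      refine h1.congr fun γ => ?_
      exact hb_eq γ
    have hsum : Summable b := (e₁.summable_iff.mp (h1'.congr fun γ => rfl))
    refine ⟨hsum, ?_⟩
    calc ∑' γ, b γ = ∑' γ, b (e₁ γ) := (e₁.tsum_eq b).symm
      _ = ∑' γ : G, φ (g * γ⁻¹) * φ γ / (1 + ℓ γ) ^ t := tsum_congr fun γ => (hb_eq γ).symm
      _ ≤ Ct * φ g := h2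
  -- summability of the convolution terms
  have hsumF : Summable (fun γ : G => ‖f₁ γ * f₂ (γ⁻¹ * g)‖) := by
    refine Summable.of_nonneg_of_le (fun γ => norm_nonneg _) hpt ?_
    exact (hsa.1.add hsb.1).mul_left K
  refine ⟨hsumF, ?_⟩
  have hsumf : Summable (fun γ : G => f₁ γ * f₂ (γ⁻¹ * g)) := by
    rw [← summable_norm_iff]
    exact hsumF
  have step1 : ‖∑' γ : G, f₁ γ * f₂ (γ⁻¹ * g)‖ ≤ ∑' γ : G, ‖f₁ γ * f₂ (γ⁻¹ * g)‖ :=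
    norm_tsum_le_tsum_norm hsumF
  have step2 : ∑' γ : G, ‖f₁ γ * f₂ (γ⁻¹ * g)‖ ≤ ∑' γ, K * (a γ + b γ) :=
    Summable.tsum_le_tsum hpt hsumF ((hsa.1.add hsb.1).mul_left K)
  have step3 : ∑' γ, K * (a γ + b γ) = K * ((∑' γ, a γ) + ∑' γ, b γ) := by
    rw [tsum_mul_left, Summable.tsum_add hsa.1 hsb.1]
  have step4 : K * ((∑' γ, a γ) + ∑' γ, b γ) ≤ K * (Ct * φ g + Ct * φ g) := by
    apply mul_le_mul_of_nonneg_left _ hKnn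
    exact add_le_add hsa.2 hsb.2
  have hfin : K * (Ct * φ g + Ct * φ g) = 2 ^ (t + 1) * A₁ * A₂ * Ct * φ g / (1 + ℓ g) ^ t := by
    rw [hK, Real.rpow_add_one (by norm_num : (2:ℝ) ≠ 0) t]
    ring
  calc ‖∑' γ : G, f₁ γ * f₂ (γ⁻¹ * g)‖ ≤ ∑' γ : G, ‖f₁ γ * f₂ (γ⁻¹ * g)‖ := step1
    _ ≤ ∑' γ, K * (a γ + b γ) := step2
    _ = K * ((∑' γ, a γ) + ∑' γ, b γ) := step3
    _ ≤ K * (Ct * φ g + Ct * φ g) := step4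
    _ = 2 ^ (t + 1) * A₁ * A₂ * Ct * φ g / (1 + ℓ g) ^ t := hfin
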